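/- For every x₀ ∈ F_8 \ F_2 and every natural number n, there exists a sequence x : ℕ → F_8 with x 0 = x₀ such that for all i < n, x i ∉ F_2 and x(i+1)^2 + x(i+1) = x i + 1 + 1/(x i). -/

import Mathlib

noncomputable def K8step (x : GaloisField 2 3) : GaloisField 2 3 :=
  (x + 1 + x⁻¹) + (x + 1 + x⁻¹) ^ 4

lemma K8key (x : GaloisField 2 3) (hx0 : x ≠ 0) (hx1 : x ≠ 1) :
    K8step x ≠ 0 ∧ K8step x ≠ 1 ∧
      (K8step x) ^ 2 + K8step x = x + 1 + 1 / x := by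
  have h2 : (2 : GaloisField 2 3) = 0 := by
    exact_mod_cast CharP.cast_eq_zero (GaloisField 2 3) 2
  haveI : Fintype (GaloisField 2 3) := Fintype.ofFinite _
  have hcard : Fintype.card (GaloisField 2 3) = 8 := by
    have := GaloisField.card 2 3 (by norm_num)
    simpa using this
  have hx8 : x ^ 8 = x := by
    conv_rhs => rw [← FiniteField.pow_card x, hcard]
  have hx7 : x ^ 7 = 1 := by
    have h : x * x ^ 7 = x * 1 := by rw [mul_one]; linear_combination hx8
    exact mul_left_cancel₀ hx0 h
  set c := x + 1 + x⁻¹ with hc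
  have hc8 : c ^ 8 = c := by
    conv_rhs => rw [← FiniteField.pow_card c, hcard]
  have hS : x ^ 6 + x ^ 5 + x ^ 4 + x ^ 3 + x ^ 2 + x + 1 = 0 := by
    have hne : x - 1 ≠ 0 := sub_ne_zero.mpr hx1
    have h : (x - 1) * (x ^ 6 + x ^ 5 + x ^ 4 + x ^ 3 + x ^ 2 + x + 1) = (x - 1) * 0 := by
      rw [mul_zero]; linear_combination hx7
    exact mul_left_cancel₀ hne h
  have hTr : c + c ^ 2 + c ^ 4 = 0 := by
    rw [hc]
    field_simp
    linear_combination (7 + 3 * x + x ^ 2) * hS + (-3 - 3 * x + 4 * x ^ 3 + 6 * x ^ 4 + 4 * x ^ 5) * h2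
  have heq : (K8step x) ^ 2 + K8step x = c := by
    show (c + c ^ 4) ^ 2 + (c + c ^ 4) = c
    linear_combination hc8 + hTr + c ^ 5 * h2
  have hc0 : c ≠ 0 := by
    intro h
    have hx2 : x ^ 2 + x + 1 = 0 := by
      have h' := h
      rw [hc] at h'
      field_simp at h'
      linear_combination h'
    have hx3 : x ^ 3 = 1 := by linear_combination (x - 1) * hx2
    have h1 : (1 : GaloisField 2 3) = x := by
      rw [← hx7]; linear_combination x * (x ^ 3 + 1) * hx3
    exact hx1 h1.symm
  refine ⟨?_, ?_, ?_⟩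
  · intro h
    rw [h] at heq
    exact hc0 (by linear_combination -heq)
  · intro h
    rw [h] at heq
    exact hc0 (by linear_combination -heq + h2)
  · rw [heq, hc, one_div]

theorem stmt_3 (x₀ : GaloisField 2 3) (hx0 : x₀ ≠ 0) (hx1 : x₀ ≠ 1) (n : ℕ) :
    ∃ x : ℕ → GaloisField 2 3, x 0 = x₀ ∧
      ∀ i < n, (x i ≠ 0 ∧ x i ≠ 1) ∧
        (x (i + 1)) ^ 2 + x (i + 1) = x i + 1 + 1 / x i := by
  refine ⟨fun m => Nat.rec x₀ (fun _ xi => K8step xi) m, rfl, ?_⟩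
  have inv : ∀ i : ℕ, (Nat.rec x₀ (fun _ xi => K8step xi) i : GaloisField 2 3) ≠ 0 ∧
      (Nat.rec x₀ (fun _ xi => K8step xi) i : GaloisField 2 3) ≠ 1 := by
    intro i
    induction i with
    | zero => exact ⟨hx0, hx1⟩
    | succ i ih =>
      obtain ⟨h0, h1, _⟩ := K8key _ ih.1 ih.2
      exact ⟨h0, h1⟩
  intro i _
  exact ⟨inv i, (K8key _ (inv i).1 (inv i).2).2.2⟩
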